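/- Let X be a compact Hausdorff space, let B be a base of X, and let U₁,…,U_k be cozero subsets of X. Then there exist sequences (A_n)_{n∈ℕ} and (B_n)_{n∈ℕ} of finite subfamilies of B such that U₁ ∩ … ∩ U_k = ⋃_{n∈ℕ} ⋃A_n = ⋃_{n∈ℕ} (X \ ⋃B_n) and ⋃A_n ⊆ X \ ⋃B_n for each n. -/

import Mathlib

/-- A base of a topological space: a family of open sets such that every open
set is a union of members of the family. -/
def IsTopBase {X : Type*} [TopologicalSpace X] (B : Set (Set X)) : Prop :=
  (∀ U ∈ B, IsOpen U) ∧ ∀ U : Set X, IsOpen U → ∃ S ⊆ B, U = ⋃₀ S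

/-- A π-base: a family of nonempty open sets such that every nonempty open set
contains a member of the family. -/
def IsPiBase {X : Type*} [TopologicalSpace X] (B : Set (Set X)) : Prop :=
  (∀ U ∈ B, IsOpen U ∧ U.Nonempty) ∧
  ∀ U : Set X, IsOpen U → U.Nonempty → ∃ V ∈ B, V ⊆ U

/-- A cozero set: a set of the form `f ⁻¹' (0,1]` for a continuous `f : X → [0,1]`. -/
def IsCozeroSet {X : Type*} [TopologicalSpace X] (U : Set X) : Prop :=
  ∃ f : X → ℝ, Continuous f ∧ (∀ x, f x ∈ Set.Icc (0 : ℝ) 1) ∧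
    U = f ⁻¹' Set.Ioc (0 : ℝ) 1

/-- `s` witnesses the FNS property for the family `B`: it assigns to each
`U ∈ B` a finite subfamily `s U ⊆ B` such that whenever `U, V ∈ B` are
disjoint there are disjoint `W_U, W_V ∈ s U ∩ s V` with `U ⊆ W_U`, `V ⊆ W_V`. -/
def FNSWitness {X : Type*} (B : Set (Set X)) (s : Set X → Set (Set X)) : Prop :=
  (∀ U ∈ B, s U ⊆ B ∧ (s U).Finite) ∧
  ∀ U ∈ B, ∀ V ∈ B, Disjoint U V →
    ∃ WU ∈ s U ∩ s V, ∃ WV ∈ s U ∩ s V, Disjoint WU WV ∧ U ⊆ WU ∧ V ⊆ WV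

/-- A family `B` has the FNS property if some `s` witnesses it. -/
def HasFNS {X : Type*} (B : Set (Set X)) : Prop :=
  ∃ s : Set X → Set (Set X), FNSWitness B s

/-- A space has the π-FNS property if some π-base of it has the FNS property. -/
def HasPiFNS (X : Type*) [TopologicalSpace X] : Prop :=
  ∃ B : Set (Set X), IsPiBase B ∧ HasFNS B

/-- `u, l` witness the FN property for the family `F`. -/
def FNWitness {X : Type*} (F : Set (Set X)) (u l : Set X → Set (Set X)) : Prop :=
  (∀ V ∈ F, (u V).Finite ∧ ∀ U ∈ u V, U ∈ F ∧ V ⊆ U) ∧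
  (∀ V ∈ F, (l V).Finite ∧ ∀ U ∈ l V, U ∈ F ∧ U ⊆ V) ∧
  ∀ V ∈ F, ∀ W ∈ F, V ⊆ W → (u V ∩ l W).Nonempty

/-- A family `F` has the FN property if some pair `u, l` witnesses it. -/
def HasFN {X : Type*} (F : Set (Set X)) : Prop :=
  ∃ u l : Set X → Set (Set X), FNWitness F u l

/-- A family `P` of subsets of `X` is weakly completely regular: for any
finitely many `U₁, …, U_k ∈ P` (`k ≥ 1`) there are sequences `(A n)`, `(B n)`
of finite subfamilies of `P` with
`U₁ ∩ … ∩ U_k = ⋃ n, ⋃₀ A n = ⋃ n, (X \ ⋃₀ B n)` and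
`⋃₀ A n ⊆ X \ ⋃₀ B n` for each `n`. -/
def WeaklyCompletelyRegularFamily {X : Type*} (P : Set (Set X)) : Prop :=
  ∀ S : Set (Set X), S.Finite → S.Nonempty → S ⊆ P →
    ∃ A B : ℕ → Set (Set X),
      (∀ n, A n ⊆ P ∧ (A n).Finite) ∧ (∀ n, B n ⊆ P ∧ (B n).Finite) ∧
      ⋂₀ S = ⋃ n, ⋃₀ A n ∧ ⋂₀ S = ⋃ n, (⋃₀ B n)ᶜ ∧
      ∀ n, ⋃₀ A n ⊆ (⋃₀ B n)ᶜ

/-- The equivalence relation `x ~_P y` iff `x, y` belong to exactly the same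
members of `P`. -/
def famSetoid {X : Type*} (P : Set (Set X)) : Setoid X where
  r x y := ∀ V ∈ P, (x ∈ V ↔ y ∈ V)
  iseqv := ⟨fun _ _ _ => Iff.rfl, fun h V hV => (h V hV).symm,
    fun h1 h2 V hV => (h1 V hV).trans (h2 V hV)⟩

lemma isCozeroSet_univ {X : Type*} [TopologicalSpace X] : IsCozeroSet (Set.univ : Set X) := by
  refine ⟨fun _ => 1, continuous_const, fun x => ⟨zero_le_one, le_refl 1⟩, ?_⟩
  ext x; simp

lemma isCozeroSet_inter {X : Type*} [TopologicalSpace X] {U V : Set X}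
    (hU : IsCozeroSet U) (hV : IsCozeroSet V) : IsCozeroSet (U ∩ V) := by
  obtain ⟨f, hf, hfI, hfU⟩ := hU
  obtain ⟨g, hg, hgI, hgV⟩ := hV
  refine ⟨fun x => min (f x) (g x), hf.min hg, fun x => ⟨le_min (hfI x).1 (hgI x).1,
    min_le_of_left_le (hfI x).2⟩, ?_⟩
  ext x
  simp only [hfU, hgV, Set.mem_inter_iff, Set.mem_preimage, Set.mem_Ioc, lt_min_iff, min_le_iff]
  constructor
  · rintro ⟨⟨h1, h2⟩, h3, h4⟩; exact ⟨⟨h1, h3⟩, Or.inl h2⟩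
  · rintro ⟨⟨h1, h3⟩, _⟩; exact ⟨⟨h1, (hfI x).2⟩, h3, (hgI x).2⟩

lemma isCozeroSet_sInter {X : Type*} [TopologicalSpace X] {S : Set (Set X)}
    (hS : S.Finite) (h : ∀ U ∈ S, IsCozeroSet U) : IsCozeroSet (⋂₀ S) := by
  refine Set.Finite.induction_on
    (motive := fun S _ => (∀ U ∈ S, IsCozeroSet U) → IsCozeroSet (⋂₀ S)) S hS ?_ ?_ h
  · intro _; simpa using isCozeroSet_univ
  · intro a s _ _ ih h'
    rw [Set.sInter_insert]
    exact isCozeroSet_inter (h' a (Set.mem_insert a s))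
      (ih fun U hU => h' U (Set.mem_insert_of_mem a hU))

lemma exists_finite_base_cover {X : Type*} [TopologicalSpace X] {B : Set (Set X)}
    (hB : IsTopBase B) {K U : Set X} (hK : IsCompact K) (hU : IsOpen U) (hKU : K ⊆ U) :
    ∃ A ⊆ B, A.Finite ∧ K ⊆ ⋃₀ A ∧ ⋃₀ A ⊆ U := by
  obtain ⟨S', hS'B, hS'U⟩ := hB.2 U hU
  have hcov : K ⊆ ⋃ V ∈ S', V := by rw [← Set.sUnion_eq_biUnion, ← hS'U]; exact hKU
  obtain ⟨A, hAS', hAfin, hKA⟩ := hK.elim_finite_subcover_image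
    (fun V hV => hB.1 V (hS'B hV)) hcov
  refine ⟨A, hAS'.trans hS'B, hAfin, ?_, ?_⟩
  · rwa [Set.sUnion_eq_biUnion]
  · rw [hS'U]; exact Set.sUnion_subset_sUnion hAS'

/-- In a compact Hausdorff space, any finite intersection of cozero sets admits
a decomposition as in the definition of weak complete regularity, with the
finite subfamilies taken from any given base. -/
theorem cozero_intersection_decomposition {X : Type*} [TopologicalSpace X]
    [CompactSpace X] [T2Space X] (B : Set (Set X)) (hB : IsTopBase B)
    (S : Set (Set X)) (hSfin : S.Finite) (hSne : S.Nonempty)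
    (hScoz : ∀ U ∈ S, IsCozeroSet U) :
    ∃ A C : ℕ → Set (Set X),
      (∀ n, A n ⊆ B ∧ (A n).Finite) ∧ (∀ n, C n ⊆ B ∧ (C n).Finite) ∧
      ⋂₀ S = ⋃ n, ⋃₀ A n ∧ ⋂₀ S = ⋃ n, (⋃₀ C n)ᶜ ∧
      ∀ n, ⋃₀ A n ⊆ (⋃₀ C n)ᶜ := by
  obtain ⟨f, hf, hfI, hfS⟩ := isCozeroSet_sInter hSfin hScoz
  -- key numerical facts
  have hpos : ∀ n : ℕ, (0 : ℝ) < ((n : ℝ) + 3)⁻¹ := fun n => by positivity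
  -- compact sets K n and opens V n
  have hKcomp : ∀ n : ℕ, IsCompact (f ⁻¹' Set.Icc ((n : ℝ) + 2)⁻¹ 1) := fun n =>
    (isClosed_Icc.preimage hf).isCompact
  have hVopen : ∀ n : ℕ, IsOpen (f ⁻¹' Set.Ioi ((n : ℝ) + 3)⁻¹) := fun n =>
    isOpen_Ioi.preimage hf
  have hKV : ∀ n : ℕ, f ⁻¹' Set.Icc ((n : ℝ) + 2)⁻¹ 1 ⊆ f ⁻¹' Set.Ioi ((n : ℝ) + 3)⁻¹ := by
    intro n x hx
    have h23 : ((n : ℝ) + 3)⁻¹ < ((n : ℝ) + 2)⁻¹ := by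
      apply inv_strictAnti₀ (by positivity) (by linarith)
    exact lt_of_lt_of_le h23 hx.1
  choose A hAB hAfin hKA hAV using fun n =>
    exists_finite_base_cover hB (hKcomp n) (hVopen n) (hKV n)
  -- the closed compact set (⋂₀ S)ᶜ and opens O n
  have hcompl : (⋂₀ S)ᶜ = f ⁻¹' {0} := by
    ext x
    simp only [hfS, Set.mem_compl_iff, Set.mem_preimage, Set.mem_Ioc, Set.mem_singleton_iff]
    constructor
    · intro h
      by_contra h0
      exact h ⟨lt_of_le_of_ne (hfI x).1 (Ne.symm h0), (hfI x).2⟩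
    · rintro h ⟨h1, _⟩; rw [h] at h1; exact lt_irrefl 0 h1
  have hK'comp : IsCompact ((⋂₀ S)ᶜ) := by
    rw [hcompl]; exact (isClosed_singleton.preimage hf).isCompact
  have hOopen : ∀ n : ℕ, IsOpen (f ⁻¹' Set.Iio ((n : ℝ) + 3)⁻¹) := fun n =>
    isOpen_Iio.preimage hf
  have hK'O : ∀ n : ℕ, (⋂₀ S)ᶜ ⊆ f ⁻¹' Set.Iio ((n : ℝ) + 3)⁻¹ := by
    intro n x hx
    rw [hcompl] at hx
    simp only [Set.mem_preimage, Set.mem_singleton_iff] at hx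
    simp [Set.mem_preimage, hx, hpos n]
  choose C hCB hCfin hK'C hCO using fun n =>
    exists_finite_base_cover hB hK'comp (hOopen n) (hK'O n)
  refine ⟨A, C, fun n => ⟨hAB n, hAfin n⟩, fun n => ⟨hCB n, hCfin n⟩, ?_, ?_, ?_⟩
  · -- ⋂₀ S = ⋃ n, ⋃₀ A n
    apply Set.Subset.antisymm
    · intro x hx
      rw [hfS] at hx
      obtain ⟨n, hn⟩ := exists_nat_one_div_lt hx.1
      rw [Set.mem_iUnion]
      refine ⟨n, hKA n ?_⟩
      simp only [Set.mem_preimage, Set.mem_Icc]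
      refine ⟨?_, hx.2⟩
      rw [one_div] at hn
      have : ((n : ℝ) + 2)⁻¹ ≤ ((n : ℝ) + 1)⁻¹ :=
        inv_anti₀ (by positivity) (by linarith)
      linarith
    · intro x hx
      rw [Set.mem_iUnion] at hx
      obtain ⟨n, hn⟩ := hx
      have := hAV n hn
      simp only [Set.mem_preimage, Set.mem_Ioi] at this
      rw [hfS]
      exact ⟨lt_trans (hpos n) this, (hfI x).2⟩
  · -- ⋂₀ S = ⋃ n, (⋃₀ C n)ᶜ
    apply Set.Subset.antisymm
    · intro x hx
      have hx' := hx
      rw [hfS] at hx'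
      obtain ⟨n, hn⟩ := exists_nat_one_div_lt hx'.1
      rw [Set.mem_iUnion]
      refine ⟨n, fun hc => ?_⟩
      have := hCO n hc
      simp only [Set.mem_preimage, Set.mem_Iio] at this
      rw [one_div] at hn
      have h31 : ((n : ℝ) + 3)⁻¹ ≤ ((n : ℝ) + 1)⁻¹ :=
        inv_anti₀ (by positivity) (by linarith)
      linarith
    · intro x hx
      rw [Set.mem_iUnion] at hx
      obtain ⟨n, hn⟩ := hx
      by_contra hxS
      exact hn (hK'C n hxS)
  · -- ⋃₀ A n ⊆ (⋃₀ C n)ᶜ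
    intro n x hx hc
    have h1 := hAV n hx
    have h2 := hCO n hc
    simp only [Set.mem_preimage, Set.mem_Ioi, Set.mem_Iio] at h1 h2
    linarith
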